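/- Let p be an odd prime and let H be a nontrivial subgroup of F_p^×. Suppose A and B are nonempty H-closed subsets of F_p such that 0 ∉ A, 0 ∉ B, and 0 ∉ A+B. Then |A| + |B| ≤ p − 1 and |A+B| ≥ |A| + |B|, where A+B = {a+b : a ∈ A, b ∈ B}. -/

import Mathlib

open Pointwise

/-- The cardinality of a subgroup divides the cardinality of any finite set closed
under left multiplication by the subgroup. -/
lemma card_subgroup_dvd_card_invariant {G : Type*} [CommGroup G] [Fintype G] [DecidableEq G]
    (H : Subgroup G) (S : Finset G) (hS : ∀ h ∈ H, ∀ s ∈ S, h * s ∈ S) :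
    Nat.card H ∣ S.card := by
  classical
  have key : ∀ q ∈ S.image (QuotientGroup.mk (s := H)),
      (S.filter (fun x => (QuotientGroup.mk x : G ⧸ H) = q)).card = Nat.card H := by
    intro q hq
    obtain ⟨a, haS, haq⟩ := Finset.mem_image.1 hq
    have hfilter : S.filter (fun x => (QuotientGroup.mk x : G ⧸ H) = q)
        = Finset.univ.image (fun h : H => (h : G) * a) := by
      ext x
      simp only [Finset.mem_filter, Finset.mem_image, Finset.mem_univ, true_and]
      constructor
      · rintro ⟨hxS, hxq⟩
        have : (QuotientGroup.mk x : G ⧸ H) = QuotientGroup.mk a := by rw [hxq, haq]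
        have hmem : x⁻¹ * a ∈ H := QuotientGroup.eq.1 this
        have hmem' : a⁻¹ * x ∈ H := by
          have := H.inv_mem hmem
          simpa [mul_comm, mul_inv_rev] using this
        refine ⟨⟨a⁻¹ * x, hmem'⟩, ?_⟩
        rw [mul_comm]
        exact mul_inv_cancel_left a x
      · rintro ⟨h, rfl⟩
        refine ⟨hS h h.2 a haS, ?_⟩
        rw [← haq]
        apply QuotientGroup.eq.2
        have : ((h : G) * a)⁻¹ * a = (h : G)⁻¹ := by
          rw [mul_inv_rev, mul_assoc, mul_comm _ a, ← mul_assoc, inv_mul_cancel, one_mul]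
        rw [this]
        exact H.inv_mem h.2
    rw [hfilter, Finset.card_image_of_injective _ fun h₁ h₂ e => Subtype.ext (mul_right_cancel e),
      Finset.card_univ, Nat.card_eq_fintype_card]
  rw [Finset.card_eq_sum_card_fiberwise
    (f := (QuotientGroup.mk : G → G ⧸ H)) (fun x hx => Finset.mem_image_of_mem _ hx),
    Finset.sum_congr rfl key, Finset.sum_const, smul_eq_mul]
  exact dvd_mul_left _ _

/-- For `A ⊆ ZMod p` not containing `0` and closed under an `H`-action,
`|H|` divides `|A|`. -/
lemma card_H_dvd_ncard {p : ℕ} [Fact p.Prime] (H : Subgroup (ZMod p)ˣ) (A : Set (ZMod p))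
    (h0 : (0 : ZMod p) ∉ A)
    (hcl : ∀ (h : H), ∀ a ∈ A, ((h : (ZMod p)ˣ) : ZMod p) * a ∈ A) :
    Nat.card H ∣ A.ncard := by
  classical
  set S : Finset (ZMod p)ˣ := (Set.toFinite ((Units.val) ⁻¹' A)).toFinset with hSdef
  have hS : ∀ h ∈ H, ∀ s ∈ S, h * s ∈ S := by
    intro h hh s hs
    simp only [hSdef, Set.Finite.mem_toFinset, Set.mem_preimage] at hs ⊢
    exact hcl ⟨h, hh⟩ s hs
  have hdvd := card_subgroup_dvd_card_invariant H S hS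
  have himg : Units.val '' ((Units.val : (ZMod p)ˣ → ZMod p) ⁻¹' A) = A := by
    apply Set.image_preimage_eq_iff.2
    intro x hx
    have hxne : x ≠ 0 := fun e => h0 (e ▸ hx)
    exact (isUnit_iff_ne_zero.2 hxne).exists_left_inv.elim
      (fun y hy => ⟨(isUnit_iff_ne_zero.2 hxne).unit, rfl⟩)
  have : A.ncard = S.card := by
    rw [← himg, Set.ncard_image_of_injective _ Units.val_injective,
      Set.ncard_eq_toFinset_card _ (Set.toFinite _)]
  rw [this]
  exact hdvd

/-- Improved Cauchy–Davenport for `H`-closed sets: if `p` is an odd prime, `H` a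
nontrivial subgroup of `F_p^×`, and `A`, `B` are nonempty `H`-closed subsets of `F_p`
with `0 ∉ A`, `0 ∉ B`, and `0 ∉ A + B`, then `|A| + |B| ≤ p - 1` and
`|A + B| ≥ |A| + |B|`. -/
theorem cauchy_davenport_H_closed (p : ℕ) [Fact p.Prime] (hp : p ≠ 2)
    (H : Subgroup (ZMod p)ˣ) (hH : H ≠ ⊥)
    (A B : Set (ZMod p)) (hA : A.Nonempty) (hB : B.Nonempty)
    (hAclosed : ∀ (h : H), ∀ a ∈ A, ((h : (ZMod p)ˣ) : ZMod p) * a ∈ A)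
    (hBclosed : ∀ (h : H), ∀ b ∈ B, ((h : (ZMod p)ˣ) : ZMod p) * b ∈ B)
    (hA0 : (0 : ZMod p) ∉ A) (hB0 : (0 : ZMod p) ∉ B) (hAB0 : (0 : ZMod p) ∉ A + B) :
    A.ncard + B.ncard ≤ p - 1 ∧ A.ncard + B.ncard ≤ (A + B).ncard := by
  classical
  have hprime : p.Prime := Fact.out
  have hNeZero : NeZero p := ⟨hprime.pos.ne'⟩
  -- Part 1 : A and -B are disjoint subsets of {0}ᶜ
  have hdisj : Disjoint A (-B) := by
    rw [Set.disjoint_left]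
    intro x hxA hxB
    exact hAB0 ⟨x, hxA, -x, Set.mem_neg.1 hxB, by ring⟩
  have hnegB : (-B).ncard = B.ncard := by
    have himg : -B = (fun x => -x) '' B := by
      ext x
      simp only [Set.mem_image, Set.mem_neg]
      constructor
      · intro h; exact ⟨-x, h, by ring⟩
      · rintro ⟨y, hy, rfl⟩; simpa
    rw [himg, Set.ncard_image_of_injective _ neg_injective]
  have hsub : A ∪ -B ⊆ {(0 : ZMod p)}ᶜ := by
    rintro x (hx | hx)
    · exact fun e => hA0 (Set.mem_singleton_iff.1 e ▸ hx)
    · intro e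
      apply hB0
      have : -x ∈ B := Set.mem_neg.1 hx
      rwa [Set.mem_singleton_iff.1 e, neg_zero] at this
  have hcompl : ({(0 : ZMod p)}ᶜ : Set (ZMod p)).ncard = p - 1 := by
    have h1 := Set.ncard_add_ncard_compl ({(0 : ZMod p)} : Set (ZMod p))
    rw [Set.ncard_singleton] at h1
    have h2 : Nat.card (ZMod p) = p := by
      rw [Nat.card_eq_fintype_card, ZMod.card]
    omega
  have part1 : A.ncard + B.ncard ≤ p - 1 := by
    calc A.ncard + B.ncard = (A ∪ -B).ncard := by
          rw [Set.ncard_union_eq hdisj (Set.toFinite _) (Set.toFinite _), hnegB]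
      _ ≤ ({(0 : ZMod p)}ᶜ : Set (ZMod p)).ncard := Set.ncard_le_ncard hsub (Set.toFinite _)
      _ = p - 1 := hcompl
  refine ⟨part1, ?_⟩
  -- divisibility
  set d := Nat.card H with hd
  have hd2 : 2 ≤ d := by
    have h1 : d ≠ 1 := fun e => hH (Subgroup.card_eq_one.1 e)
    have h0 : d ≠ 0 := Nat.card_ne_zero.2 ⟨⟨1, H.one_mem⟩, inferInstance⟩
    omega
  have hdA : d ∣ A.ncard := card_H_dvd_ncard H A hA0 hAclosed
  have hdB : d ∣ B.ncard := card_H_dvd_ncard H B hB0 hBclosed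
  have hABclosed : ∀ (h : H), ∀ x ∈ A + B, ((h : (ZMod p)ˣ) : ZMod p) * x ∈ A + B := by
    rintro h x ⟨a, ha, b, hb, rfl⟩
    exact ⟨_, hAclosed h a ha, _, hBclosed h b hb, (mul_add _ _ _).symm⟩
  have hdAB : d ∣ (A + B).ncard := card_H_dvd_ncard H (A + B) hAB0 hABclosed
  -- Cauchy–Davenport
  set sA : Finset (ZMod p) := (Set.toFinite A).toFinset with hsA
  set sB : Finset (ZMod p) := (Set.toFinite B).toFinset with hsB
  have hsum : sA + sB = (Set.toFinite (A + B)).toFinset := by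
    ext x
    simp only [Finset.mem_add, Set.Finite.mem_toFinset, Set.mem_add, hsA, hsB]
  have hcd := ZMod.cauchy_davenport hprime
    (s := sA) (t := sB)
    (by obtain ⟨a, ha⟩ := hA; exact ⟨a, (Set.Finite.mem_toFinset _).2 ha⟩)
    (by obtain ⟨b, hb⟩ := hB; exact ⟨b, (Set.Finite.mem_toFinset _).2 hb⟩)
  rw [hsum] at hcd
  have hcards : sA.card = A.ncard ∧ sB.card = B.ncard ∧
      ((Set.toFinite (A + B)).toFinset).card = (A + B).ncard := by
    refine ⟨?_, ?_, ?_⟩ <;> rw [Set.ncard_eq_toFinset_card _ (Set.toFinite _)]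
  obtain ⟨e1, e2, e3⟩ := hcards
  rw [e1, e2, e3] at hcd
  -- arithmetic conclusion
  have hApos : 1 ≤ A.ncard := by
    obtain ⟨a, ha⟩ := hA
    exact (Set.ncard_pos (Set.toFinite A)).2 ⟨a, ha⟩
  have hmin : A.ncard + B.ncard - 1 ≤ (A + B).ncard := by
    have hlt : A.ncard + B.ncard - 1 < p := by
      have := hprime.pos
      omega
    omega
  by_contra hcon
  push_neg at hcon
  have heq : (A + B).ncard = A.ncard + B.ncard - 1 := by omega
  have hsumdvd : d ∣ A.ncard + B.ncard := dvd_add hdA hdB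
  have : d ∣ 1 := by
    have := Nat.dvd_sub hsumdvd hdAB
    rwa [heq, Nat.sub_sub_self (by omega)] at this
  exact absurd (Nat.le_of_dvd one_pos this) (by omega)
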